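/- Let K be a field, let n ≥ 1, let a_0, a_1, …, a_n ∈ ℤ, and set s_k := a_0 + a_1 + ⋯ + a_k for 0 ≤ k ≤ n. Let D_0, D_1, …, D_n and E be K-linear derivations of LaurentPolynomial K with D_k t = t^{a_k + 1} for each k and E t = t^{s_n + 1}. Then the left-normed bracket satisfies ⁅D_0, D_1, …, D_n⁆ = (∏_{k=1}^{n} ((a_k − s_{k−1} : ℤ) : K)) • E. (The value of a left-normed monomial on the basis elements e_{a_0}, …, e_{a_n} of U_1 is an explicit scalar multiple of e_{a_0 + ⋯ + a_n}.) -/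

import Mathlib

open LaurentPolynomial

variable (K : Type*) [Field K]

/-- The left-normed bracket `⁅D 0, D 1, …, D n⁆` of derivations. -/
noncomputable def lnDer {A : Type*} [CommRing A] [Algebra K A]
    (D : ℕ → Derivation K A A) : ℕ → Derivation K A A
  | 0 => D 0
  | n + 1 => ⁅lnDer D n, D (n + 1)⁆

section Aux

variable {K}

lemma der_T_nat (D : Derivation K (LaurentPolynomial K) (LaurentPolynomial K)) (m : ℕ) :
    D (T (m : ℤ)) = ((m : ℤ) : LaurentPolynomial K) * (T ((m : ℤ) - 1) * D (T 1)) := by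
  cases m with
  | zero => simp [T_zero]
  | succ k =>
    have h1 : (T ((k:ℤ)+1) : LaurentPolynomial K) = T 1 ^ (k+1) := by
      rw [T_pow]; norm_num
    push_cast
    rw [h1, D.leibniz_pow, show ((k:ℤ) + 1 - 1) = (k:ℤ) by ring]
    rw [show (T 1 : LaurentPolynomial K) ^ (k + 1 - 1) = T (k:ℤ) by rw [T_pow]; norm_num]
    simp only [smul_eq_mul, nsmul_eq_mul]
    push_cast
    ring

lemma der_T (D : Derivation K (LaurentPolynomial K) (LaurentPolynomial K)) (n : ℤ) :
    D (T n) = (n : LaurentPolynomial K) * (T (n - 1) * D (T 1)) := by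
  obtain ⟨m, rfl | rfl⟩ := Int.eq_nat_or_neg n
  · exact der_T_nat D m
  · have h : (T (-(m:ℤ)) : LaurentPolynomial K) * T (m:ℤ) = 1 := by
      rw [← T_add]; simp [T_zero]
    have h2 : (T (-(m:ℤ)) : LaurentPolynomial K) ^ 2 = T (-2*(m:ℤ)) := by
      rw [T_pow]; ring_nf
    have h3 : (T (-2*(m:ℤ)) : LaurentPolynomial K) * T ((m:ℤ)-1) = T (-(m:ℤ)-1) := by
      rw [← T_add]; ring_nf
    rw [D.leibniz_of_mul_eq_one h, der_T_nat D m, smul_eq_mul, h2, ← h3]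
    push_cast
    ring

lemma C_mul_eq_smul (a : K) (p : LaurentPolynomial K) : C a * p = a • p := by
  rw [Algebra.smul_def]; rfl

lemma der_ext {D1 D2 : Derivation K (LaurentPolynomial K) (LaurentPolynomial K)}
    (h : D1 (T 1) = D2 (T 1)) : D1 = D2 := by
  apply Derivation.ext
  intro p
  induction p using LaurentPolynomial.induction_on' with
  | add p q hp hq => simp [hp, hq]
  | C_mul_T n a =>
    rw [C_mul_eq_smul, D1.map_smul, D2.map_smul, der_T D1 n, der_T D2 n, h]

lemma bracket_val (P Q : Derivation K (LaurentPolynomial K) (LaurentPolynomial K))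
    (c : K) (u b : ℤ) (hP : P (T 1) = c • T (u + 1)) (hQ : Q (T 1) = T (b + 1)) :
    ⁅P, Q⁆ (T 1) = (((b - u : ℤ) : K) * c) • T (u + b + 1) := by
  rw [Derivation.commutator_apply, hQ, der_T P (b + 1), hP, Q.map_smul,
    der_T Q (u + 1), hQ]
  simp only [← C_mul_eq_smul, map_mul, map_intCast]
  rw [show (T (b + 1 - 1) : LaurentPolynomial K) * (C c * T (u + 1))
        = C c * (T (b + 1 - 1) * T (u + 1)) from by ring,
      show (T (u + 1 - 1) : LaurentPolynomial K) * T (b + 1)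
        = T (u + 1 - 1) * T (b + 1) from rfl,
      ← T_add, ← T_add]
  ring_nf
  push_cast
  ring

lemma key (K : Type*) [Field K] (n : ℕ) (hn : 1 ≤ n) (a : ℕ → ℤ)
    (D : ℕ → Derivation K (LaurentPolynomial K) (LaurentPolynomial K))
    (hD : ∀ k ≤ n, (D k) (T 1) = T (a k + 1)) :
    lnDer K D n (T 1) =
      (∏ k ∈ Finset.Icc 1 n, ((a k - ∑ j ∈ Finset.range k, a j : ℤ) : K)) •
        T ((∑ j ∈ Finset.range (n + 1), a j) + 1) := by
  induction n, hn using Nat.le_induction with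
  | base =>
    have h0 := hD 0 (by norm_num)
    have h1 := hD 1 le_rfl
    have hb := bracket_val (D 0) (D 1) 1 (a 0) (a 1) (by rw [h0, one_smul]) h1
    show (⁅lnDer K D 0, D 1⁆ :
      Derivation K (LaurentPolynomial K) (LaurentPolynomial K)) (T 1) = _
    rw [show lnDer K D 0 = D 0 from rfl, hb]
    simp [Finset.sum_range_succ]
  | succ n hn ih =>
    have hD' : ∀ k ≤ n, (D k) (T 1) = T (a k + 1) := fun k hk => hD k (hk.trans n.le_succ)
    have hb := bracket_val (lnDer K D n) (D (n + 1))
      (∏ k ∈ Finset.Icc 1 n, ((a k - ∑ j ∈ Finset.range k, a j : ℤ) : K))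
      (∑ j ∈ Finset.range (n + 1), a j) (a (n + 1)) (ih hD') (hD (n + 1) le_rfl)
    show (⁅lnDer K D n, D (n + 1)⁆ :
      Derivation K (LaurentPolynomial K) (LaurentPolynomial K)) (T 1) = _
    rw [hb, Finset.prod_Icc_succ_top (by omega : 1 ≤ n + 1),
      Finset.sum_range_succ _ (n + 1)]
    ring_nf

end Aux

/-- The value of a left-normed bracket on the basis elements `e_{a_0}, …, e_{a_n}` of
`U_1`: with `s_k = a_0 + ⋯ + a_k`, one has
`⁅e_{a_0}, …, e_{a_n}⁆ = (∏_{k=1}^n (a_k - s_{k-1})) e_{s_n}`. -/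
theorem lnDer_eq_prod_smul (n : ℕ) (hn : 1 ≤ n) (a : ℕ → ℤ)
    (D : ℕ → Derivation K (LaurentPolynomial K) (LaurentPolynomial K))
    (E : Derivation K (LaurentPolynomial K) (LaurentPolynomial K))
    (hD : ∀ k ≤ n, (D k) (T 1) = T (a k + 1))
    (hE : E (T 1) = T ((∑ j ∈ Finset.range (n + 1), a j) + 1)) :
    lnDer K D n =
      (∏ k ∈ Finset.Icc 1 n, ((a k - ∑ j ∈ Finset.range k, a j : ℤ) : K)) • E := by
  apply der_ext
  rw [key K n hn a D hD]
  simp [hE]
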